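/- Let λ > 0 and m ∈ (-1,1). The function g(w) = (1+w)^{-2 + m/(2λ)} (1-w)^{-2 - m/(2λ)} exp( -(1 - m w)/(λ(1-w²)) ) is differentiable on (-1,1) and satisfies on (-1,1) the stationary Fokker-Planck equation (λ/2) d/dw [ (1-w²)² g(w) ] + (w - m) g(w) = 0. -/

import Mathlib

open Set

private lemma aux_hasDerivAt (l m p q w : ℝ) (hl : 0 < l) (hw : w ∈ Ioo (-1:ℝ) 1) :
    HasDerivAt (fun x : ℝ => (1+x)^p * (1-x)^q * Real.exp (-(1-m*x)/(l*(1-x^2))))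
      (((1+w)^p * (1-w)^q * Real.exp (-(1-m*w)/(l*(1-w^2)))) *
        (p/(1+w) - q/(1-w) + (m + m*w^2 - 2*w)/(l*(1-w^2)^2))) w := by
  obtain ⟨hw1, hw2⟩ := hw
  have hP : (0:ℝ) < 1 + w := by linarith
  have hQ : (0:ℝ) < 1 - w := by linarith
  have hl' : l ≠ 0 := hl.ne'
  have hD2 : (1:ℝ) - w^2 ≠ 0 := by nlinarith
  have hD : l * (1 - w^2) ≠ 0 := mul_ne_zero hl' hD2
  have h1 : HasDerivAt (fun x : ℝ => (1+x)^p) (1 * p * (1+w)^(p-1)) w := by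
    have := ((hasDerivAt_const w (1:ℝ)).add (hasDerivAt_id w)).rpow_const
      (p := p) (Or.inl hP.ne')
    simpa using this
  have h2 : HasDerivAt (fun x : ℝ => (1-x)^q) ((-1) * q * (1-w)^(q-1)) w := by
    have := ((hasDerivAt_const w (1:ℝ)).sub (hasDerivAt_id w)).rpow_const
      (p := q) (Or.inl hQ.ne')
    simpa using this
  have h3 : HasDerivAt (fun x : ℝ => -(1-m*x)) (m) w := by
    have := ((hasDerivAt_const w (1:ℝ)).sub ((hasDerivAt_id w).const_mul m)).neg
    exact this.congr_deriv (by ring)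
  have h4 : HasDerivAt (fun x : ℝ => l*(1-x^2)) (l * (-(2*w))) w := by
    have := ((hasDerivAt_const w (1:ℝ)).sub (hasDerivAt_pow 2 w)).const_mul l
    simpa using this
  have h5 := (h3.div h4 hD).exp
  have h6 := (h1.mul h2).mul h5
  refine h6.congr_deriv ?_
  simp only [Pi.mul_apply, Pi.div_apply]
  rw [Real.rpow_sub_one hP.ne', Real.rpow_sub_one hQ.ne']
  field_simp
  ring

/-- The stationary solution for `D(|w|) = 1 - w²`: the explicit density `g`
is differentiable on `(-1,1)` and solves
`(λ/2) d/dw[(1-w²)² g] + (w-m) g = 0` there. -/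
theorem stationary_solution_quadratic_diffusion
    (l m : ℝ) (hl : 0 < l) (hm : m ∈ Ioo (-1:ℝ) 1)
    (g : ℝ → ℝ)
    (hg : ∀ w, g w =
      (1 + w) ^ (-2 + m / (2*l)) * (1 - w) ^ (-2 - m / (2*l)) *
        Real.exp (-(1 - m*w) / (l * (1 - w^2)))) :
    DifferentiableOn ℝ g (Ioo (-1:ℝ) 1) ∧
      ∀ w ∈ Ioo (-1:ℝ) 1,
        HasDerivAt (fun w => (l/2) * ((1 - w^2)^2 * g w)) (-((w - m) * g w)) w := by
  have hgfun : g = fun x => (1 + x) ^ (-2 + m / (2*l)) * (1 - x) ^ (-2 - m / (2*l)) *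
      Real.exp (-(1 - m*x) / (l * (1 - x^2))) := funext hg
  constructor
  · intro w hw
    rw [hgfun]
    exact (aux_hasDerivAt l m _ _ w hl hw).differentiableAt.differentiableWithinAt
  · intro w hw
    obtain ⟨hw1, hw2⟩ := hw
    have hP : (0:ℝ) < 1 + w := by linarith
    have hQ : (0:ℝ) < 1 - w := by linarith
    have hl' : l ≠ 0 := hl.ne'
    have hD : (1:ℝ) - w^2 ≠ 0 := by nlinarith
    have hG := (aux_hasDerivAt l m (m/(2*l)) (-(m/(2*l))) w hl ⟨hw1, hw2⟩).const_mul (l/2)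
    have hEq : (fun w => (l/2) * ((1 - w^2)^2 * g w)) =ᶠ[nhds w]
        (fun x : ℝ => (l/2) * ((1+x)^(m/(2*l)) * (1-x)^(-(m/(2*l))) *
          Real.exp (-(1-m*x)/(l*(1-x^2))))) := by
      filter_upwards [isOpen_Ioo.eventually_mem (show w ∈ Ioo (-1:ℝ) 1 from ⟨hw1, hw2⟩)]
        with x hx
      obtain ⟨hx1, hx2⟩ := hx
      have hPx : (0:ℝ) < 1 + x := by linarith
      have hQx : (0:ℝ) < 1 - x := by linarith
      have hDx : (1:ℝ) - x^2 ≠ 0 := by nlinarith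
      have e1 : (1+x) ^ (-2 + m/(2*l)) = (1+x) ^ (m/(2*l)) / (1+x)^(2:ℕ) := by
        rw [show (-2 + m/(2*l)) = m/(2*l) - ((2:ℕ):ℝ) by push_cast; ring,
          Real.rpow_sub hPx, Real.rpow_natCast]
      have e2 : (1-x) ^ (-2 - m/(2*l)) = (1-x) ^ (-(m/(2*l))) / (1-x)^(2:ℕ) := by
        rw [show (-2 - m/(2*l)) = -(m/(2*l)) - ((2:ℕ):ℝ) by push_cast; ring,
          Real.rpow_sub hQx, Real.rpow_natCast]
      rw [hg x, e1, e2]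
      field_simp
      ring
    have hF := hG.congr_of_eventuallyEq hEq
    refine hF.congr_deriv ?_
    have e1 : (1+w) ^ (-2 + m/(2*l)) = (1+w) ^ (m/(2*l)) / (1+w)^(2:ℕ) := by
      rw [show (-2 + m/(2*l)) = m/(2*l) - ((2:ℕ):ℝ) by push_cast; ring,
        Real.rpow_sub hP, Real.rpow_natCast]
    have e2 : (1-w) ^ (-2 - m/(2*l)) = (1-w) ^ (-(m/(2*l))) / (1-w)^(2:ℕ) := by
      rw [show (-2 - m/(2*l)) = -(m/(2*l)) - ((2:ℕ):ℝ) by push_cast; ring,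
        Real.rpow_sub hQ, Real.rpow_natCast]
    rw [hg w, e1, e2]
    field_simp
    ring
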